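/- The theory T does not have uniform definability of types: there is an L-formula φ(v; w) for which there is no single L-formula ψ(w; u) such that every global φ-type definable over a model M of T has a φ-definition of the form ψ(w; c) for some tuple c from M. -/

import Mathlib

open FirstOrder FirstOrder.Language

namespace BPPaper

/-- The function symbols of the four-sorted language `L`, implemented one-sortedly:
constants `g_T`, `r` (tree sort), `g_L`, `0` (level sort); unary functions
`pred_T`, `pred_L`, the level maps `ℓ_T`, `ℓ_A`, `ℓ_B`; binary functions
`⊓` (the meet of the tree) and `f : A × B → T`. -/
inductive TFunc : ℕ → Type
  | gT : TFunc 0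
  | root : TFunc 0
  | gL : TFunc 0
  | zero : TFunc 0
  | predT : TFunc 1
  | predL : TFunc 1
  | ellT : TFunc 1
  | ellA : TFunc 1
  | ellB : TFunc 1
  | meet : TFunc 2
  | app : TFunc 2

/-- The relation symbols of `L`: unary predicates carving out the four sorts
`A`, `B`, `T`, `L`, and the two orders `≤_T` and `≤_L`. -/
inductive TRel : ℕ → Type
  | sortA : TRel 1
  | sortB : TRel 1
  | sortT : TRel 1
  | sortL : TRel 1
  | leT : TRel 2
  | leL : TRel 2

/-- The language `L` of the paper (sorts implemented as unary predicates). -/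
def tLang : Language := ⟨TFunc, TRel⟩

/-- Raw interpretation data for an `L`-structure. -/
class TOps (M : Type*) where
  SA : M → Prop
  SB : M → Prop
  ST : M → Prop
  SL : M → Prop
  leT : M → M → Prop
  leL : M → M → Prop
  meet : M → M → M
  app : M → M → M
  predT : M → M
  predL : M → M
  lT : M → M
  lA : M → M
  lB : M → M
  gT : M
  root : M
  gL : M
  zero : M

open TOps

instance tStructure (M : Type*) [TOps M] : tLang.Structure M where
  funMap {_n} f x :=
    match f with
    | .gT => gT
    | .root => root
    | .gL => gL
    | .zero => zero
    | .predT => predT (x 0)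
    | .predL => predL (x 0)
    | .ellT => lT (x 0)
    | .ellA => lA (x 0)
    | .ellB => lB (x 0)
    | .meet => meet (x 0) (x 1)
    | .app => app (x 0) (x 1)
  RelMap {_n} r x :=
    match r with
    | .sortA => SA (x 0)
    | .sortB => SB (x 0)
    | .sortT => ST (x 0)
    | .sortL => SL (x 0)
    | .leT => leT (x 0) (x 1)
    | .leL => leL (x 0) (x 1)

/-- The theory `T` of the paper, given by its (semantically presented) axioms (i)–(viii).
The four sorts partition the universe; all function symbols take the garbage/default
values specified below outside of their intended domains. -/
class TModel (M : Type*) extends TOps M where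
  -- the four sorts partition the universe, and the constants lie in the correct sorts
  sorts_cover : ∀ x : M, SA x ∨ SB x ∨ ST x ∨ SL x
  disj_AB : ∀ x : M, ¬(SA x ∧ SB x)
  disj_AT : ∀ x : M, ¬(SA x ∧ ST x)
  disj_AL : ∀ x : M, ¬(SA x ∧ SL x)
  disj_BT : ∀ x : M, ¬(SB x ∧ ST x)
  disj_BL : ∀ x : M, ¬(SB x ∧ SL x)
  disj_TL : ∀ x : M, ¬(ST x ∧ SL x)
  gT_sort : ST (gT : M)
  root_sort : ST (root : M)
  gL_sort : SL (gL : M)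
  zero_sort : SL (zero : M)
  -- (i) `(L ∖ {g_L}, ≤_L)` is a discrete linear order with least element `0`, no greatest
  -- element, and predecessor function `pred_L`; the garbage point `g_L` is unrelated to
  -- everything and `pred_L (g_L) = g_L`.
  zero_ne_gL : (zero : M) ≠ gL
  leL_dom : ∀ x y : M, leL x y → (SL x ∧ x ≠ gL ∧ SL y ∧ y ≠ gL)
  leL_refl : ∀ x : M, SL x → x ≠ gL → leL x x
  leL_antisymm : ∀ x y : M, leL x y → leL y x → x = y
  leL_trans : ∀ x y z : M, leL x y → leL y z → leL x z
  leL_total : ∀ x y : M, SL x → x ≠ gL → SL y → y ≠ gL → leL x y ∨ leL y x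
  zero_least : ∀ x : M, SL x → x ≠ gL → leL zero x
  leL_no_max : ∀ x : M, SL x → x ≠ gL → ∃ y : M, SL y ∧ y ≠ gL ∧ leL x y ∧ y ≠ x
  predL_zero : predL (zero : M) = zero
  predL_gL : predL (gL : M) = gL
  predL_junk : ∀ x : M, ¬SL x → predL x = gL
  predL_spec : ∀ x : M, SL x → x ≠ gL → x ≠ zero →
    SL (predL x) ∧ predL x ≠ gL ∧ leL (predL x) x ∧ predL x ≠ x ∧
      ∀ y : M, leL y x → y = x ∨ leL y (predL x)
  succL_exists : ∀ x : M, SL x → x ≠ gL →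
    ∃ y : M, SL y ∧ y ≠ gL ∧ y ≠ zero ∧ predL y = x ∧ y ≠ x
  -- (ii) `(T ∖ {g_T}, ≤_T, ⊓)` is a meet-tree with root `r` and binary ramification, in
  -- which the set of predecessors of any element is a discrete linear order with
  -- predecessor function `pred_T`; the garbage point `g_T` is unrelated to everything.
  root_ne_gT : (root : M) ≠ gT
  leT_dom : ∀ x y : M, leT x y → (ST x ∧ x ≠ gT ∧ ST y ∧ y ≠ gT)
  leT_refl : ∀ x : M, ST x → x ≠ gT → leT x x
  leT_antisymm : ∀ x y : M, leT x y → leT y x → x = y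
  leT_trans : ∀ x y z : M, leT x y → leT y z → leT x z
  root_least : ∀ x : M, ST x → x ≠ gT → leT root x
  pred_linear : ∀ x y z : M, leT y x → leT z x → leT y z ∨ leT z y
  meet_spec : ∀ x y : M, ST x → x ≠ gT → ST y → y ≠ gT →
    ST (meet x y) ∧ meet x y ≠ gT ∧ leT (meet x y) x ∧ leT (meet x y) y ∧
      ∀ w : M, leT w x → leT w y → leT w (meet x y)
  meet_junk : ∀ x y : M, ¬(ST x ∧ x ≠ gT ∧ ST y ∧ y ≠ gT) → meet x y = gT
  predT_root : predT (root : M) = root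
  predT_gT : predT (gT : M) = gT
  predT_junk : ∀ x : M, ¬ST x → predT x = gT
  predT_spec : ∀ x : M, ST x → x ≠ gT → x ≠ root →
    ST (predT x) ∧ predT x ≠ gT ∧ leT (predT x) x ∧ predT x ≠ x ∧
      ∀ y : M, leT y x → y = x ∨ leT y (predT x)
  ramification : ∀ x : M, ST x → x ≠ gT →
    ∃ y z : M, y ≠ z ∧ (ST y ∧ y ≠ gT ∧ predT y = x ∧ y ≠ x) ∧
      (ST z ∧ z ≠ gT ∧ predT z = x ∧ z ≠ x) ∧
      ∀ w : M, ST w → w ≠ gT → predT w = x → w ≠ x → w = y ∨ w = z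
  -- (iii) `ℓ_T` is a surjective level function `T ∖ {g_T} → L ∖ {g_L}` which, on the set of
  -- predecessors of any fixed `t`, is an order isomorphism onto an initial segment of
  -- `L ∖ {g_L}`; moreover every element of the tree has extensions to all higher levels.
  lT_gT : lT (gT : M) = gL
  lT_junk : ∀ x : M, ¬ST x → lT x = gL
  lT_sort : ∀ x : M, ST x → x ≠ gT → SL (lT x) ∧ lT x ≠ gL
  lT_surj : ∀ c : M, SL c → c ≠ gL → ∃ x : M, ST x ∧ x ≠ gT ∧ lT x = c
  lT_mono : ∀ t y z : M, leT y t → leT z t → (leT y z ↔ leL (lT y) (lT z))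
  lT_initial : ∀ t c : M, ST t → t ≠ gT → leL c (lT t) → ∃ y : M, leT y t ∧ lT y = c
  lT_ext : ∀ t c : M, ST t → t ≠ gT → leL (lT t) c → ∃ t' : M, leT t t' ∧ lT t' = c
  -- (iv) `g_L` is not in the image of `ℓ_A` nor of `ℓ_B` (on the sorts `A`, `B`)
  lA_sort : ∀ a : M, SA a → SL (lA a) ∧ lA a ≠ gL
  lA_junk : ∀ x : M, ¬SA x → lA x = gL
  lB_sort : ∀ b : M, SB b → SL (lB b) ∧ lB b ≠ gL
  lB_junk : ∀ x : M, ¬SB x → lB x = gL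
  -- (v) all fibers of `ℓ_A` and `ℓ_B` over `L ∖ {g_L}` are infinite
  fiberA_infinite : ∀ c : M, SL c → c ≠ gL → {a : M | SA a ∧ lA a = c}.Infinite
  fiberB_infinite : ∀ c : M, SL c → c ≠ gL → {b : M | SB b ∧ lB b = c}.Infinite
  -- (vi) `f(a,b) = g_T` if and only if `ℓ_A(a) ≠ ℓ_B(b)`
  app_eq_gT_iff : ∀ a b : M, SA a → SB b → (app a b = gT ↔ lA a ≠ lB b)
  app_junk : ∀ a b : M, ¬(SA a ∧ SB b) → app a b = gT
  -- (vii) if `ℓ_A(a) = ℓ_B(b)` then `ℓ_T(f(a,b)) = ℓ_A(a)`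
  app_level : ∀ a b : M, SA a → SB b → lA a = lB b →
    ST (app a b) ∧ lT (app a b) = lA a
  -- (viii) at each level, `f` is a generic surjection
  generic_B : ∀ c : M, SL c → c ≠ gL → ∀ (n : ℕ) (t a : Fin n → M),
    (∀ i, ST (t i) ∧ t i ≠ gT ∧ lT (t i) = c) → (∀ i, SA (a i) ∧ lA (a i) = c) →
    Function.Injective a → {b : M | SB b ∧ ∀ i, app (a i) b = t i}.Infinite
  generic_A : ∀ c : M, SL c → c ≠ gL → ∀ (n : ℕ) (t b : Fin n → M),
    (∀ i, ST (t i) ∧ t i ≠ gT ∧ lT (t i) = c) → (∀ i, SB (b i) ∧ lB (b i) = c) →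
    Function.Injective b → {a : M | SA a ∧ ∀ i, app a (b i) = t i}.Infinite

/-- The theory `T`: the set of `L`-sentences true in every structure satisfying the
axioms (i)–(viii) above. -/
def tTheory : tLang.Theory := {φ : tLang.Sentence | ∀ (M : Type) [TModel M], M ⊨ φ}


/-!
STATEMENT 14: The theory `T` does not have uniform definability of types: there is an
`L`-formula `φ(v; w)` for which there is no single `L`-formula `ψ(w; u)` such that every
global `φ`-type definable over a model `M` of `T` has a `φ`-definition of the form
`ψ(w; c)` for some tuple `c` from `M`.

A (complete, global) `φ`-type over a model `M` is rendered by the set `q` of parameter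
tuples `b` from `M` at which `φ` belongs to the type; consistency with the elementary
diagram of `M` amounts (that theory being complete) to the condition that every finite
positive-negative pattern from `q` is realized in `M`.  The type is definable exactly when
`q` is a definable subset of `M`.
-/

/-- `q` is (the positive part of) a complete global `φ`-type over the model `M`. -/
def IsPhiType (M : Type) [TModel M] {n m : ℕ} (φ : tLang.Formula (Fin n ⊕ Fin m))
    (q : Set (Fin m → M)) : Prop :=
  ∀ F G : Finset (Fin m → M), ↑F ⊆ q → (∀ b ∈ G, b ∉ q) →
    ∃ v : Fin n → M, (∀ b ∈ F, φ.Realize (Sum.elim v b)) ∧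
      (∀ b ∈ G, ¬ φ.Realize (Sum.elim v b))



/-- lookup in an association list -/
def look : List (ℕ × ℕ) → ℕ → Option ℕ
  | [], _ => none
  | p :: l, k => if p.1 = k then some p.2 else look l k

lemma look_eq_some_of_mem {l : List (ℕ × ℕ)} (hnd : (l.map Prod.fst).Nodup)
    {p : ℕ × ℕ} (hp : p ∈ l) : look l p.1 = some p.2 := by
  induction l with
  | nil => exact absurd hp List.not_mem_nil
  | cons q l ih =>
    rcases List.mem_cons.mp hp with rfl | hp'
    · simp [look]
    · have hne : q.1 ≠ p.1 := by
        intro h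
        exact (List.nodup_cons.mp hnd).1 (h ▸ List.mem_map_of_mem (f := Prod.fst) hp')
      simp only [look, if_neg hne]
      exact ih (List.nodup_cons.mp hnd).2 hp'

lemma mem_keys_of_look_eq_some {l : List (ℕ × ℕ)} {k v : ℕ}
    (h : look l k = some v) : k ∈ l.map Prod.fst := by
  induction l with
  | nil => simp [look] at h
  | cons q l ih =>
    by_cases hq : q.1 = k
    · exact List.mem_map.mpr ⟨q, List.mem_cons_self, hq⟩
    · simp only [look, if_neg hq] at h
      exact List.mem_cons.mpr (Or.inr (ih h))

lemma le_foldr_max {l : List ℕ} {k : ℕ} (h : k ∈ l) : k ≤ l.foldr max 0 := by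
  induction l with
  | nil => exact absurd h List.not_mem_nil
  | cons a l ih =>
    rcases List.mem_cons.mp h with rfl | h'
    · exact le_max_left _ _
    · exact le_trans (ih h') (le_max_right _ _)

/-- bound on the keys of an association list -/
def keyBound (l : List (ℕ × ℕ)) : ℕ := (l.map Prod.fst).foldr max 0

lemma look_eq_none_of_gt {l : List (ℕ × ℕ)} {k : ℕ} (h : keyBound l < k) :
    look l k = none := by
  cases hl : look l k with
  | none => rfl
  | some v => exact absurd (le_foldr_max (mem_keys_of_look_eq_some hl)) (not_le.mpr h)

/-- decode a natural number to an association list, with infinitely many codes for each list -/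
def dec (n : ℕ) : List (ℕ × ℕ) := Denumerable.ofNat (List (ℕ × ℕ)) n.unpair.1

lemma dec_pair (l : List (ℕ × ℕ)) (m : ℕ) : dec (Nat.pair (Encodable.encode l) m) = l := by
  simp [dec, Nat.unpair_pair]

/-- The doubly generic matrix. -/
def N (i j : ℕ) : ℕ :=
  match look (dec j) i, look (dec i) j with
  | some v, none => v
  | none, some v => v
  | _, _ => 0

/-- column genericity: for any finite prescription of values on rows (given as an
association list with nodup keys), infinitely many columns realize it -/
lemma colMaster {l : List (ℕ × ℕ)} (hnd : (l.map Prod.fst).Nodup) :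
    {j : ℕ | ∀ p ∈ l, N p.1 j = p.2}.Infinite := by
  set B := (l.map fun p => keyBound (dec p.1)).foldr max 0 with hB
  apply Set.infinite_of_injective_forall_mem
    (f := fun m : ℕ => Nat.pair (Encodable.encode l) (B + m + 1))
  case hi =>
    intro m m' h
    have := congrArg (fun x => x.unpair.2) h
    simpa [Nat.unpair_pair] using this
  case hf =>
    intro m p hp
    set j := Nat.pair (Encodable.encode l) (B + m + 1) with hj
    have h1 : look (dec j) p.1 = some p.2 := by
      rw [hj, dec_pair]; exact look_eq_some_of_mem hnd hp
    have h2 : look (dec p.1) j = none := by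
      apply look_eq_none_of_gt
      have hle : keyBound (dec p.1) ≤ B :=
        le_foldr_max (List.mem_map.mpr ⟨p, hp, rfl⟩)
      have : B + m + 1 ≤ j := Nat.right_le_pair _ _
      omega
    simp [N, h1, h2]

/-- row genericity -/
lemma rowMaster {l : List (ℕ × ℕ)} (hnd : (l.map Prod.fst).Nodup) :
    {i : ℕ | ∀ p ∈ l, N i p.1 = p.2}.Infinite := by
  set B := (l.map fun p => keyBound (dec p.1)).foldr max 0 with hB
  apply Set.infinite_of_injective_forall_mem
    (f := fun m : ℕ => Nat.pair (Encodable.encode l) (B + m + 1))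
  case hi =>
    intro m m' h
    have := congrArg (fun x => x.unpair.2) h
    simpa [Nat.unpair_pair] using this
  case hf =>
    intro m p hp
    set i := Nat.pair (Encodable.encode l) (B + m + 1) with hi
    have h1 : look (dec i) p.1 = some p.2 := by
      rw [hi, dec_pair]; exact look_eq_some_of_mem hnd hp
    have h2 : look (dec p.1) i = none := by
      apply look_eq_none_of_gt
      have hle : keyBound (dec p.1) ≤ B :=
        le_foldr_max (List.mem_map.mpr ⟨p, hp, rfl⟩)
      have : B + m + 1 ≤ i := Nat.right_le_pair _ _
      omega
    simp [N, h1, h2]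



/-! ### Auxiliary: encoding of tree nodes -/

/-- decode a natural to a list of booleans of length `c` (surjective for each `c`) -/
def enc (c n : ℕ) : List Bool :=
  match Encodable.decode (α := List Bool) n with
  | some l => if l.length = c then l else List.replicate c false
  | none => List.replicate c false

lemma enc_length (c n : ℕ) : (enc c n).length = c := by
  unfold enc
  cases Encodable.decode (α := List Bool) n with
  | none => simp
  | some l =>
    by_cases h : l.length = c <;> simp [h]

lemma enc_encode {c : ℕ} {v : List Bool} (h : v.length = c) :
    enc c (Encodable.encode v) = v := by
  unfold enc
  rw [Encodable.encodek]
  simp [h]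

/-- longest common prefix -/
def lcp : List Bool → List Bool → List Bool
  | a :: as, b :: bs => if a = b then a :: lcp as bs else []
  | _, _ => []

lemma lcp_prefix_left : ∀ s t : List Bool, lcp s t <+: s := by
  intro s
  induction s with
  | nil => intro t; cases t <;> simp [lcp]
  | cons a as ih =>
    intro t
    cases t with
    | nil => simp [lcp]
    | cons b bs =>
      by_cases h : a = b
      · simpa [lcp, h] using ih bs
      · simp [lcp, h]

lemma lcp_prefix_right : ∀ s t : List Bool, lcp s t <+: t := by
  intro s
  induction s with
  | nil => intro t; cases t <;> simp [lcp]
  | cons a as ih =>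
    intro t
    cases t with
    | nil => simp [lcp]
    | cons b bs =>
      by_cases h : a = b
      · subst h; simpa [lcp] using ih bs
      · simp [lcp, h]

lemma prefix_lcp : ∀ {w s t : List Bool}, w <+: s → w <+: t → w <+: lcp s t := by
  intro w
  induction w with
  | nil => intro s t _ _; exact List.nil_prefix
  | cons x ws ih =>
    intro s t hs ht
    obtain ⟨s', rfl⟩ := hs
    obtain ⟨t', rfl⟩ := ht
    simp only [List.cons_append, lcp, if_pos rfl]
    exact List.cons_prefix_cons.mpr ⟨rfl, ih (List.prefix_append ws s') (List.prefix_append ws t')⟩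

lemma prefix_of_prefix_length_le {y z t : List Bool} (hy : y <+: t) (hz : z <+: t)
    (h : y.length ≤ z.length) : y <+: z := by
  rcases List.prefix_or_prefix_of_prefix hy hz with h' | h'
  · exact h'
  · rw [h'.eq_of_length_le h]

lemma prefix_length_lt {y x : List Bool} (h : y <+: x) (hne : y ≠ x) :
    y.length < x.length := by
  rcases lt_or_eq_of_le h.length_le with h' | h'
  · exact h'
  · exact absurd (List.IsPrefix.eq_of_length h h') hne

lemma prefix_dropLast_of_ne {y x : List Bool} (h : y <+: x) (hne : y ≠ x) :
    y <+: x.dropLast := by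
  apply prefix_of_prefix_length_le h (List.dropLast_prefix x)
  have := prefix_length_lt h hne
  rw [List.length_dropLast]
  omega

/-! ### The standard model -/

/-- The carrier of the standard model. -/
inductive Mc : Type
  | A : ℕ → ℕ → Mc
  | B : ℕ → ℕ → Mc
  | T : Option (List Bool) → Mc
  | L : Option ℕ → Mc
deriving DecidableEq

namespace Mc

def SAd : Mc → Prop | .A _ _ => True | _ => False
def SBd : Mc → Prop | .B _ _ => True | _ => False
def STd : Mc → Prop | .T _ => True | _ => False
def SLd : Mc → Prop | .L _ => True | _ => False

def leTd : Mc → Mc → Prop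
  | .T (some s), .T (some t) => s <+: t
  | _, _ => False

def leLd : Mc → Mc → Prop
  | .L (some m), .L (some n) => m ≤ n
  | _, _ => False

def meetd : Mc → Mc → Mc
  | .T (some s), .T (some t) => .T (some (lcp s t))
  | _, _ => .T none

def appd : Mc → Mc → Mc
  | .A c i, .B c' j => if c = c' then .T (some (enc c (N i j))) else .T none
  | _, _ => .T none

def predTd : Mc → Mc
  | .T (some s) => .T (some s.dropLast)
  | _ => .T none

def predLd : Mc → Mc
  | .L (some n) => .L (some (n - 1))
  | _ => .L none

def lTd : Mc → Mc
  | .T (some s) => .L (some s.length)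
  | _ => .L none

def lAd : Mc → Mc | .A c _ => .L (some c) | _ => .L none
def lBd : Mc → Mc | .B c _ => .L (some c) | _ => .L none

end Mc

instance : TOps Mc where
  SA := Mc.SAd
  SB := Mc.SBd
  ST := Mc.STd
  SL := Mc.SLd
  leT := Mc.leTd
  leL := Mc.leLd
  meet := Mc.meetd
  app := Mc.appd
  predT := Mc.predTd
  predL := Mc.predLd
  lT := Mc.lTd
  lA := Mc.lAd
  lB := Mc.lBd
  gT := .T none
  root := .T (some [])
  gL := .L none
  zero := .L (some 0)

namespace Mc

lemma ST_elim {x : Mc} (h : TOps.ST x) (hne : x ≠ TOps.gT) :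
    ∃ s : List Bool, x = .T (some s) := by
  cases x with
  | T o =>
    cases o with
    | none => exact absurd rfl hne
    | some s => exact ⟨s, rfl⟩
  | A _ _ => exact absurd h (by exact id)
  | B _ _ => exact absurd h (by exact id)
  | L _ => exact absurd h (by exact id)

lemma SL_elim {x : Mc} (h : TOps.SL x) (hne : x ≠ TOps.gL) :
    ∃ n : ℕ, x = .L (some n) := by
  cases x with
  | L o =>
    cases o with
    | none => exact absurd rfl hne
    | some n => exact ⟨n, rfl⟩
  | A _ _ => exact absurd h (by exact id)
  | B _ _ => exact absurd h (by exact id)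
  | T _ => exact absurd h (by exact id)

lemma SA_elim {x : Mc} (h : TOps.SA x) : ∃ c i, x = .A c i := by
  cases x with
  | A c i => exact ⟨c, i, rfl⟩
  | B _ _ => exact absurd h (by exact id)
  | T _ => exact absurd h (by exact id)
  | L _ => exact absurd h (by exact id)

lemma SB_elim {x : Mc} (h : TOps.SB x) : ∃ c i, x = .B c i := by
  cases x with
  | B c i => exact ⟨c, i, rfl⟩
  | A _ _ => exact absurd h (by exact id)
  | T _ => exact absurd h (by exact id)
  | L _ => exact absurd h (by exact id)

lemma leTd_elim {x y : Mc} (h : Mc.leTd x y) :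
    ∃ s t : List Bool, x = .T (some s) ∧ y = .T (some t) ∧ s <+: t := by
  cases x with
  | T o =>
    cases o with
    | some s =>
      cases y with
      | T o' =>
        cases o' with
        | some t => exact ⟨s, t, rfl, rfl, h⟩
        | none => exact absurd h (by exact id)
      | A _ _ => exact absurd h (by exact id)
      | B _ _ => exact absurd h (by exact id)
      | L _ => exact absurd h (by exact id)
    | none => exact absurd h (by exact id)
  | A _ _ => exact absurd h (by exact id)
  | B _ _ => exact absurd h (by exact id)
  | L _ => exact absurd h (by exact id)

lemma leLd_elim {x y : Mc} (h : Mc.leLd x y) :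
    ∃ m n : ℕ, x = .L (some m) ∧ y = .L (some n) ∧ m ≤ n := by
  cases x with
  | L o =>
    cases o with
    | some m =>
      cases y with
      | L o' =>
        cases o' with
        | some n => exact ⟨m, n, rfl, rfl, h⟩
        | none => exact absurd h (by exact id)
      | A _ _ => exact absurd h (by exact id)
      | B _ _ => exact absurd h (by exact id)
      | T _ => exact absurd h (by exact id)
    | none => exact absurd h (by exact id)
  | A _ _ => exact absurd h (by exact id)
  | B _ _ => exact absurd h (by exact id)
  | T _ => exact absurd h (by exact id)

end Mc


namespace Mc

open TOps

/-- index extraction -/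
def aIdx : Mc → ℕ | .A _ i => i | _ => 0
def bIdx : Mc → ℕ | .B _ i => i | _ => 0
def nodeOf : Mc → List Bool | .T (some s) => s | _ => []

end Mc

instance : TModel Mc := { (inferInstance : TOps Mc) with
  sorts_cover := by
    intro x
    cases x with
    | A _ _ => exact Or.inl trivial
    | B _ _ => exact Or.inr (Or.inl trivial)
    | T _ => exact Or.inr (Or.inr (Or.inl trivial))
    | L _ => exact Or.inr (Or.inr (Or.inr trivial))
  disj_AB := by rintro x ⟨h1, h2⟩; cases x <;> first | exact h1 | exact h2
  disj_AT := by rintro x ⟨h1, h2⟩; cases x <;> first | exact h1 | exact h2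
  disj_AL := by rintro x ⟨h1, h2⟩; cases x <;> first | exact h1 | exact h2
  disj_BT := by rintro x ⟨h1, h2⟩; cases x <;> first | exact h1 | exact h2
  disj_BL := by rintro x ⟨h1, h2⟩; cases x <;> first | exact h1 | exact h2
  disj_TL := by rintro x ⟨h1, h2⟩; cases x <;> first | exact h1 | exact h2
  gT_sort := by trivial
  root_sort := by trivial
  gL_sort := by trivial
  zero_sort := by trivial
  zero_ne_gL := by simp [TOps.zero, TOps.gL]
  leL_dom := by
    intro x y h
    obtain ⟨m, n, rfl, rfl, _⟩ := Mc.leLd_elim h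
    exact ⟨trivial, by simp [TOps.gL], trivial, by simp [TOps.gL]⟩
  leL_refl := by
    intro x h hne
    obtain ⟨n, rfl⟩ := Mc.SL_elim h hne
    exact le_refl n
  leL_antisymm := by
    intro x y h h'
    obtain ⟨m, n, rfl, rfl, hmn⟩ := Mc.leLd_elim h
    have hnm : n ≤ m := h'
    rw [le_antisymm hmn hnm]
  leL_trans := by
    intro x y z h h'
    obtain ⟨m, n, rfl, rfl, hmn⟩ := Mc.leLd_elim h
    obtain ⟨n', k, heq, rfl, hnk⟩ := Mc.leLd_elim h'
    simp only [Mc.L.injEq, Option.some.injEq] at heq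
    subst heq
    exact le_trans hmn hnk
  leL_total := by
    intro x y hx hnex hy hney
    obtain ⟨m, rfl⟩ := Mc.SL_elim hx hnex
    obtain ⟨n, rfl⟩ := Mc.SL_elim hy hney
    exact Nat.le_total m n
  zero_least := by
    intro x h hne
    obtain ⟨n, rfl⟩ := Mc.SL_elim h hne
    exact Nat.zero_le n
  leL_no_max := by
    intro x h hne
    obtain ⟨n, rfl⟩ := Mc.SL_elim h hne
    exact ⟨.L (some (n + 1)), trivial, by simp [TOps.gL], Nat.le_succ n, by simp⟩
  predL_zero := by rfl
  predL_gL := by rfl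
  predL_junk := by
    intro x h
    cases x with
    | L _ => exact absurd trivial h
    | A _ _ => rfl
    | B _ _ => rfl
    | T _ => rfl
  predL_spec := by
    intro x h hne hz
    obtain ⟨n, rfl⟩ := Mc.SL_elim h hne
    have hn : n ≠ 0 := by
      intro h0
      exact hz (by simp [TOps.zero, h0])
    refine ⟨trivial, by simp [TOps.predL, Mc.predLd, TOps.gL], Nat.sub_le n 1, by simp [TOps.predL, Mc.predLd]; omega, ?_⟩
    intro y hy
    obtain ⟨m, n', rfl, heq, hmn⟩ := Mc.leLd_elim hy
    simp only [Mc.L.injEq, Option.some.injEq] at heq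
    subst heq
    by_cases hc : m = n
    · exact Or.inl (by rw [hc])
    · exact Or.inr (by show m ≤ n - 1; omega)
  succL_exists := by
    intro x h hne
    obtain ⟨n, rfl⟩ := Mc.SL_elim h hne
    exact ⟨.L (some (n + 1)), trivial, by simp [TOps.gL], by simp [TOps.zero],
      by simp [TOps.predL, Mc.predLd], by simp⟩
  root_ne_gT := by simp [TOps.root, TOps.gT]
  leT_dom := by
    intro x y h
    obtain ⟨s, t, rfl, rfl, _⟩ := Mc.leTd_elim h
    exact ⟨trivial, by simp [TOps.gT], trivial, by simp [TOps.gT]⟩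
  leT_refl := by
    intro x h hne
    obtain ⟨s, rfl⟩ := Mc.ST_elim h hne
    exact List.prefix_refl s
  leT_antisymm := by
    intro x y h h'
    obtain ⟨s, t, rfl, rfl, hst⟩ := Mc.leTd_elim h
    have hts : t <+: s := h'
    rw [hst.eq_of_length_le hts.length_le]
  leT_trans := by
    intro x y z h h'
    obtain ⟨s, t, rfl, rfl, hst⟩ := Mc.leTd_elim h
    obtain ⟨t', u, heq, rfl, htu⟩ := Mc.leTd_elim h'
    simp only [Mc.T.injEq, Option.some.injEq] at heq
    subst heq
    exact hst.trans htu
  root_least := by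
    intro x h hne
    obtain ⟨s, rfl⟩ := Mc.ST_elim h hne
    exact List.nil_prefix
  pred_linear := by
    intro x y z h h'
    obtain ⟨s, t, rfl, rfl, hst⟩ := Mc.leTd_elim h
    obtain ⟨u, t', rfl, heq, hut⟩ := Mc.leTd_elim h'
    simp only [Mc.T.injEq, Option.some.injEq] at heq
    subst heq
    exact List.prefix_or_prefix_of_prefix hst hut
  meet_spec := by
    intro x y hx hnex hy hney
    obtain ⟨s, rfl⟩ := Mc.ST_elim hx hnex
    obtain ⟨t, rfl⟩ := Mc.ST_elim hy hney
    refine ⟨trivial, by simp [TOps.gT, TOps.meet, Mc.meetd], lcp_prefix_left s t,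
      lcp_prefix_right s t, ?_⟩
    intro w hw1 hw2
    obtain ⟨a, s', rfl, heq, has⟩ := Mc.leTd_elim hw1
    simp only [Mc.T.injEq, Option.some.injEq] at heq
    subst heq
    have hat : a <+: t := hw2
    exact prefix_lcp has hat
  meet_junk := by
    intro x y h
    cases x with
    | T o =>
      cases y with
      | T o' =>
        cases o with
        | none => rfl
        | some s =>
          cases o' with
          | none => rfl
          | some t =>
            exact absurd ⟨trivial, by simp [TOps.gT], trivial, by simp [TOps.gT]⟩ h
      | A _ _ => cases o <;> rfl
      | B _ _ => cases o <;> rfl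
      | L _ => cases o <;> rfl
    | A _ _ => rfl
    | B _ _ => rfl
    | L _ => rfl
  predT_root := by rfl
  predT_gT := by rfl
  predT_junk := by
    intro x h
    cases x with
    | T _ => exact absurd trivial h
    | A _ _ => rfl
    | B _ _ => rfl
    | L _ => rfl
  predT_spec := by
    intro x h hne hroot
    obtain ⟨s, rfl⟩ := Mc.ST_elim h hne
    have hs : s ≠ [] := by
      intro h0
      exact hroot (by simp [TOps.root, h0])
    refine ⟨trivial, by simp [TOps.predT, Mc.predTd, TOps.gT], List.dropLast_prefix s, ?_, ?_⟩
    · intro heq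
      simp only [TOps.predT, Mc.predTd, Mc.T.injEq, Option.some.injEq] at heq
      have := congrArg List.length heq
      rw [List.length_dropLast] at this
      have : 0 < s.length := List.length_pos_iff.mpr hs
      omega
    · intro y hy
      obtain ⟨t, s', rfl, heq, hts⟩ := Mc.leTd_elim hy
      simp only [Mc.T.injEq, Option.some.injEq] at heq
      subst heq
      by_cases hc : t = s
      · exact Or.inl (by rw [hc])
      · exact Or.inr (prefix_dropLast_of_ne hts hc)
  ramification := by
    intro x h hne
    obtain ⟨s, rfl⟩ := Mc.ST_elim h hne
    refine ⟨.T (some (s ++ [false])), .T (some (s ++ [true])), by simp,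
      ⟨trivial, by simp [TOps.gT], by simp [TOps.predT, Mc.predTd, List.dropLast_concat],
        by simp⟩,
      ⟨trivial, by simp [TOps.gT], by simp [TOps.predT, Mc.predTd, List.dropLast_concat],
        by simp⟩, ?_⟩
    intro w hw hwne hwpred hwnx
    obtain ⟨l, rfl⟩ := Mc.ST_elim hw hwne
    have heq : l.dropLast = s := by
      simpa [TOps.predT, Mc.predTd] using hwpred
    have hl : l ≠ [] := by
      intro h0
      subst h0
      simp at heq
      exact hwnx (by simp [heq])
    have hrec : l = s ++ [l.getLast hl] := by
      conv_lhs => rw [← List.dropLast_append_getLast hl]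
      rw [heq]
    cases hb : l.getLast hl with
    | false => exact Or.inl (by rw [hrec, hb])
    | true => exact Or.inr (by rw [hrec, hb])
  lT_gT := by rfl
  lT_junk := by
    intro x h
    cases x with
    | T _ => exact absurd trivial h
    | A _ _ => rfl
    | B _ _ => rfl
    | L _ => rfl
  lT_sort := by
    intro x h hne
    obtain ⟨s, rfl⟩ := Mc.ST_elim h hne
    exact ⟨trivial, by simp [TOps.gL, TOps.lT, Mc.lTd]⟩
  lT_surj := by
    intro c h hne
    obtain ⟨n, rfl⟩ := Mc.SL_elim h hne
    exact ⟨.T (some (List.replicate n false)), trivial, by simp [TOps.gT],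
      by simp [TOps.lT, Mc.lTd]⟩
  lT_mono := by
    intro t y z h1 h2
    obtain ⟨a, c, rfl, rfl, hac⟩ := Mc.leTd_elim h1
    obtain ⟨b, c', rfl, heq, hbc⟩ := Mc.leTd_elim h2
    simp only [Mc.T.injEq, Option.some.injEq] at heq
    subst heq
    constructor
    · intro h
      have : a <+: b := h
      exact this.length_le
    · intro h
      have hlen : a.length ≤ b.length := h
      exact prefix_of_prefix_length_le hac hbc hlen
  lT_initial := by
    intro t c h hne hc
    obtain ⟨s, rfl⟩ := Mc.ST_elim h hne
    have hc' : Mc.leLd c (.L (some s.length)) := hc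
    obtain ⟨m, n, rfl, heq, hmn⟩ := Mc.leLd_elim hc'
    simp only [Mc.L.injEq, Option.some.injEq] at heq
    subst heq
    refine ⟨.T (some (s.take m)), List.take_prefix m s, ?_⟩
    simp [TOps.lT, Mc.lTd, List.length_take, Nat.min_eq_left hmn]
  lT_ext := by
    intro t c h hne hc
    obtain ⟨s, rfl⟩ := Mc.ST_elim h hne
    have hc' : Mc.leLd (.L (some s.length)) c := hc
    obtain ⟨m, n, heq, rfl, hmn⟩ := Mc.leLd_elim hc'
    simp only [Mc.L.injEq, Option.some.injEq] at heq
    subst heq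
    refine ⟨.T (some (s ++ List.replicate (n - s.length) false)), List.prefix_append _ _, ?_⟩
    simp only [TOps.lT, Mc.lTd, List.length_append, List.length_replicate, Mc.L.injEq,
      Option.some.injEq]
    omega
  lA_sort := by
    intro a h
    obtain ⟨c, i, rfl⟩ := Mc.SA_elim h
    exact ⟨trivial, by simp [TOps.gL, TOps.lA, Mc.lAd]⟩
  lA_junk := by
    intro x h
    cases x with
    | A _ _ => exact absurd trivial h
    | B _ _ => rfl
    | T _ => rfl
    | L _ => rfl
  lB_sort := by
    intro b h
    obtain ⟨c, i, rfl⟩ := Mc.SB_elim h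
    exact ⟨trivial, by simp [TOps.gL, TOps.lB, Mc.lBd]⟩
  lB_junk := by
    intro x h
    cases x with
    | B _ _ => exact absurd trivial h
    | A _ _ => rfl
    | T _ => rfl
    | L _ => rfl
  fiberA_infinite := by
    intro c h hne
    obtain ⟨n, rfl⟩ := Mc.SL_elim h hne
    apply Set.infinite_of_injective_forall_mem (f := fun i : ℕ => Mc.A n i)
    case hi => intro i j hij; simpa using hij
    case hf => intro i; exact ⟨trivial, rfl⟩
  fiberB_infinite := by
    intro c h hne
    obtain ⟨n, rfl⟩ := Mc.SL_elim h hne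
    apply Set.infinite_of_injective_forall_mem (f := fun i : ℕ => Mc.B n i)
    case hi => intro i j hij; simpa using hij
    case hf => intro i; exact ⟨trivial, rfl⟩
  app_eq_gT_iff := by
    intro a b ha hb
    obtain ⟨c, i, rfl⟩ := Mc.SA_elim ha
    obtain ⟨c', j, rfl⟩ := Mc.SB_elim hb
    by_cases hcc : c = c'
    · subst hcc
      simp [TOps.app, Mc.appd, TOps.gT, TOps.lA, TOps.lB, Mc.lAd, Mc.lBd]
    · simp [TOps.app, Mc.appd, hcc, TOps.gT, TOps.lA, TOps.lB, Mc.lAd, Mc.lBd]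
  app_junk := by
    intro a b h
    cases a with
    | A c i =>
      cases b with
      | B c' j => exact absurd ⟨trivial, trivial⟩ h
      | A _ _ => rfl
      | T _ => rfl
      | L _ => rfl
    | B _ _ => rfl
    | T _ => rfl
    | L _ => rfl
  app_level := by
    intro a b ha hb hl
    obtain ⟨c, i, rfl⟩ := Mc.SA_elim ha
    obtain ⟨c', j, rfl⟩ := Mc.SB_elim hb
    have hcc : c = c' := by
      simpa [TOps.lA, TOps.lB, Mc.lAd, Mc.lBd] using hl
    subst hcc
    constructor
    · simp only [TOps.app, Mc.appd, if_pos rfl]; trivial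
    · simp [TOps.app, Mc.appd, TOps.lT, Mc.lTd, TOps.lA, Mc.lAd, enc_length]
  generic_B := by
    intro c hc hcne n t a ht ha hinj
    obtain ⟨ℓ, rfl⟩ := Mc.SL_elim hc hcne
    have hti : ∀ i, t i = Mc.T (some (Mc.nodeOf (t i))) ∧ (Mc.nodeOf (t i)).length = ℓ := by
      intro i
      obtain ⟨hST, hne, hlev⟩ := ht i
      obtain ⟨v, hv⟩ := Mc.ST_elim hST hne
      rw [hv]
      refine ⟨rfl, ?_⟩
      rw [hv] at hlev
      simpa [TOps.lT, Mc.lTd, Mc.nodeOf] using hlev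
    have hai : ∀ i, a i = Mc.A ℓ (Mc.aIdx (a i)) := by
      intro i
      obtain ⟨hSA, hlev⟩ := ha i
      obtain ⟨ci, ii, hv⟩ := Mc.SA_elim hSA
      rw [hv] at hlev ⊢
      have : ci = ℓ := by simpa [TOps.lA, Mc.lAd] using hlev
      rw [this]
      rfl
    set ι : Fin n → ℕ := fun i => Mc.aIdx (a i) with hι
    have hιinj : Function.Injective ι := by
      intro i j hij
      apply hinj
      rw [hai i, hai j]
      exact congrArg (Mc.A ℓ) hij
    set l : List (ℕ × ℕ) := List.ofFn (fun i => (ι i, Encodable.encode (Mc.nodeOf (t i)))) with hl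
    have hnd : (l.map Prod.fst).Nodup := by
      rw [hl, List.map_ofFn]
      rw [List.nodup_ofFn]
      exact fun i j hij => hιinj hij
    have hinf := colMaster hnd
    apply Set.Infinite.mono (s := (fun j => Mc.B ℓ j) '' {j : ℕ | ∀ p ∈ l, N p.1 j = p.2})
    · rintro x ⟨j, hj, rfl⟩
      refine ⟨trivial, ?_⟩
      intro i
      have hmem : (ι i, Encodable.encode (Mc.nodeOf (t i))) ∈ l := by
        rw [hl]
        exact List.mem_ofFn.mpr ⟨i, rfl⟩
      have hNij := hj _ hmem
      rw [hai i, (hti i).1]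
      show Mc.appd (Mc.A ℓ (ι i)) (Mc.B ℓ j) = _
      simp [Mc.appd, hNij, enc_encode (hti i).2]
    · exact Set.infinite_image_iff (fun x _ y _ hxy => by simpa using hxy) |>.mpr hinf
  generic_A := by
    intro c hc hcne n t b ht hb hinj
    obtain ⟨ℓ, rfl⟩ := Mc.SL_elim hc hcne
    have hti : ∀ i, t i = Mc.T (some (Mc.nodeOf (t i))) ∧ (Mc.nodeOf (t i)).length = ℓ := by
      intro i
      obtain ⟨hST, hne, hlev⟩ := ht i
      obtain ⟨v, hv⟩ := Mc.ST_elim hST hne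
      rw [hv]
      refine ⟨rfl, ?_⟩
      rw [hv] at hlev
      simpa [TOps.lT, Mc.lTd, Mc.nodeOf] using hlev
    have hbi : ∀ i, b i = Mc.B ℓ (Mc.bIdx (b i)) := by
      intro i
      obtain ⟨hSB, hlev⟩ := hb i
      obtain ⟨ci, ii, hv⟩ := Mc.SB_elim hSB
      rw [hv] at hlev ⊢
      have : ci = ℓ := by simpa [TOps.lB, Mc.lBd] using hlev
      rw [this]
      rfl
    set ι : Fin n → ℕ := fun i => Mc.bIdx (b i) with hι
    have hιinj : Function.Injective ι := by
      intro i j hij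
      apply hinj
      rw [hbi i, hbi j]
      exact congrArg (Mc.B ℓ) hij
    set l : List (ℕ × ℕ) := List.ofFn (fun i => (ι i, Encodable.encode (Mc.nodeOf (t i)))) with hl
    have hnd : (l.map Prod.fst).Nodup := by
      rw [hl, List.map_ofFn]
      rw [List.nodup_ofFn]
      exact fun i j hij => hιinj hij
    have hinf := rowMaster hnd
    apply Set.Infinite.mono (s := (fun j => Mc.A ℓ j) '' {i : ℕ | ∀ p ∈ l, N i p.1 = p.2})
    · rintro x ⟨j, hj, rfl⟩
      refine ⟨trivial, ?_⟩
      intro i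
      have hmem : (ι i, Encodable.encode (Mc.nodeOf (t i))) ∈ l := by
        rw [hl]
        exact List.mem_ofFn.mpr ⟨i, rfl⟩
      have hNij := hj _ hmem
      rw [hbi i, (hti i).1]
      show Mc.appd (Mc.A ℓ j) (Mc.B ℓ (ι i)) = _
      simp [Mc.appd, hNij, enc_encode (hti i).2]
    · exact Set.infinite_image_iff (fun x _ y _ hxy => by simpa using hxy) |>.mpr hinf
  }

/-! ### The level-one colouring and a back-and-forth automorphism construction -/

/-- the boolean determined by a level-1 node code -/
def bitOf (n : ℕ) : Bool := (enc 1 n).headI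

lemma enc_one (n : ℕ) : enc 1 n = [bitOf n] := by
  obtain ⟨a, ha⟩ := List.length_eq_one_iff.mp (enc_length 1 n)
  rw [bitOf, ha]
  rfl

lemma bitOf_encode (b : Bool) : bitOf (Encodable.encode [b]) = b := by
  rw [bitOf, enc_encode (by simp : ([b] : List Bool).length = 1)]
  rfl

/-- the level-one colouring of the generic matrix -/
def C (i j : ℕ) : Bool := bitOf (N i j)

lemma C_rowGeneric {l : List (ℕ × Bool)} (hnd : (l.map Prod.fst).Nodup) :
    {i : ℕ | ∀ p ∈ l, C i p.1 = p.2}.Infinite := by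
  have hnd' : ((l.map fun p => (p.1, Encodable.encode [p.2])).map Prod.fst).Nodup := by
    simpa [List.map_map, Function.comp_def] using hnd
  apply (rowMaster hnd').mono
  intro i hi p hp
  have := hi (p.1, Encodable.encode [p.2]) (List.mem_map.mpr ⟨p, hp, rfl⟩)
  simp only at this
  rw [C, this, bitOf_encode]

lemma C_colGeneric {l : List (ℕ × Bool)} (hnd : (l.map Prod.fst).Nodup) :
    {j : ℕ | ∀ p ∈ l, C p.1 j = p.2}.Infinite := by
  have hnd' : ((l.map fun p => (p.1, Encodable.encode [p.2])).map Prod.fst).Nodup := by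
    simpa [List.map_map, Function.comp_def] using hnd
  apply (colMaster hnd').mono
  intro j hj p hp
  have := hj (p.1, Encodable.encode [p.2]) (List.mem_map.mpr ⟨p, hp, rfl⟩)
  simp only at this
  rw [C, this, bitOf_encode]

lemma exists_fresh_row (cols : List (ℕ × Bool)) (hnd : (cols.map Prod.fst).Nodup)
    (avoid : Finset ℕ) : ∃ i, i ∉ avoid ∧ ∀ p ∈ cols, C i p.1 = p.2 := by
  obtain ⟨i, hi, hni⟩ := (C_rowGeneric hnd).exists_notMem_finset avoid
  exact ⟨i, hni, hi⟩

lemma exists_fresh_col (rows : List (ℕ × Bool)) (hnd : (rows.map Prod.fst).Nodup)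
    (avoid : Finset ℕ) : ∃ j, j ∉ avoid ∧ ∀ p ∈ rows, C p.1 j = p.2 := by
  obtain ⟨j, hj, hnj⟩ := (C_colGeneric hnd).exists_notMem_finset avoid
  exact ⟨j, hnj, hj⟩

/-- a finite partial isomorphism of the level-one bipartite system -/
structure PI where
  G : List (ℕ × ℕ)
  H : List (ℕ × ℕ)
  ndG1 : (G.map Prod.fst).Nodup
  ndG2 : (G.map Prod.snd).Nodup
  ndH1 : (H.map Prod.fst).Nodup
  ndH2 : (H.map Prod.snd).Nodup
  compat : ∀ p ∈ G, ∀ q ∈ H, C p.2 q.2 = C p.1 q.1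

def PI.le (P Q : PI) : Prop := (∀ p ∈ P.G, p ∈ Q.G) ∧ (∀ q ∈ P.H, q ∈ Q.H)

lemma PI.le_refl (P : PI) : PI.le P P := ⟨fun _ h => h, fun _ h => h⟩

lemma PI.le_trans {P Q R : PI} (h1 : PI.le P Q) (h2 : PI.le Q R) : PI.le P R :=
  ⟨fun p hp => h2.1 p (h1.1 p hp), fun q hq => h2.2 q (h1.2 q hq)⟩

lemma extend_domG (P : PI) (i : ℕ) :
    ∃ Q : PI, PI.le P Q ∧ i ∈ Q.G.map Prod.fst := by
  by_cases hi : i ∈ P.G.map Prod.fst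
  · exact ⟨P, PI.le_refl P, hi⟩
  · obtain ⟨i', hi'av, hi'vals⟩ := exists_fresh_row (P.H.map fun q => (q.2, C i q.1))
      (by simpa [List.map_map, Function.comp_def] using P.ndH2) (P.G.map Prod.snd).toFinset
    refine ⟨⟨(i, i') :: P.G, P.H, ?_, ?_, P.ndH1, P.ndH2, ?_⟩,
      ⟨fun p hp => List.mem_cons_of_mem _ hp, fun q hq => hq⟩, by simp⟩
    · simpa [List.nodup_cons, hi] using P.ndG1
    · simp only [List.map_cons, List.nodup_cons]
      exact ⟨fun h => hi'av (List.mem_toFinset.mpr h), P.ndG2⟩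
    · intro p hp q hq
      rcases List.mem_cons.mp hp with rfl | hp'
      · exact hi'vals (q.2, C i q.1) (List.mem_map.mpr ⟨q, hq, rfl⟩)
      · exact P.compat p hp' q hq

lemma extend_ranG (P : PI) (i' : ℕ) :
    ∃ Q : PI, PI.le P Q ∧ i' ∈ Q.G.map Prod.snd := by
  by_cases hi : i' ∈ P.G.map Prod.snd
  · exact ⟨P, PI.le_refl P, hi⟩
  · obtain ⟨i, hiav, hivals⟩ := exists_fresh_row (P.H.map fun q => (q.1, C i' q.2))
      (by simpa [List.map_map, Function.comp_def] using P.ndH1) (P.G.map Prod.fst).toFinset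
    refine ⟨⟨(i, i') :: P.G, P.H, ?_, ?_, P.ndH1, P.ndH2, ?_⟩,
      ⟨fun p hp => List.mem_cons_of_mem _ hp, fun q hq => hq⟩, by simp⟩
    · simp only [List.map_cons, List.nodup_cons]
      exact ⟨fun h => hiav (List.mem_toFinset.mpr h), P.ndG1⟩
    · simpa [List.nodup_cons, hi] using P.ndG2
    · intro p hp q hq
      rcases List.mem_cons.mp hp with rfl | hp'
      · exact (hivals (q.1, C i' q.2) (List.mem_map.mpr ⟨q, hq, rfl⟩)).symm
      · exact P.compat p hp' q hq

lemma extend_domH (P : PI) (j : ℕ) :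
    ∃ Q : PI, PI.le P Q ∧ j ∈ Q.H.map Prod.fst := by
  by_cases hj : j ∈ P.H.map Prod.fst
  · exact ⟨P, PI.le_refl P, hj⟩
  · obtain ⟨j', hj'av, hj'vals⟩ := exists_fresh_col (P.G.map fun p => (p.2, C p.1 j))
      (by simpa [List.map_map, Function.comp_def] using P.ndG2) (P.H.map Prod.snd).toFinset
    refine ⟨⟨P.G, (j, j') :: P.H, P.ndG1, P.ndG2, ?_, ?_, ?_⟩,
      ⟨fun p hp => hp, fun q hq => List.mem_cons_of_mem _ hq⟩, by simp⟩
    · simpa [List.nodup_cons, hj] using P.ndH1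
    · simp only [List.map_cons, List.nodup_cons]
      exact ⟨fun h => hj'av (List.mem_toFinset.mpr h), P.ndH2⟩
    · intro p hp q hq
      rcases List.mem_cons.mp hq with rfl | hq'
      · exact hj'vals (p.2, C p.1 j) (List.mem_map.mpr ⟨p, hp, rfl⟩)
      · exact P.compat p hp q hq'

lemma extend_ranH (P : PI) (j' : ℕ) :
    ∃ Q : PI, PI.le P Q ∧ j' ∈ Q.H.map Prod.snd := by
  by_cases hj : j' ∈ P.H.map Prod.snd
  · exact ⟨P, PI.le_refl P, hj⟩
  · obtain ⟨j, hjav, hjvals⟩ := exists_fresh_col (P.G.map fun p => (p.1, C p.2 j'))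
      (by simpa [List.map_map, Function.comp_def] using P.ndG1) (P.H.map Prod.fst).toFinset
    refine ⟨⟨P.G, (j, j') :: P.H, P.ndG1, P.ndG2, ?_, ?_, ?_⟩,
      ⟨fun p hp => hp, fun q hq => List.mem_cons_of_mem _ hq⟩, by simp⟩
    · simp only [List.map_cons, List.nodup_cons]
      exact ⟨fun h => hjav (List.mem_toFinset.mpr h), P.ndH1⟩
    · simpa [List.nodup_cons, hj] using P.ndH2
    · intro p hp q hq
      rcases List.mem_cons.mp hq with rfl | hq'
      · exact (hjvals (p.1, C p.2 j') (List.mem_map.mpr ⟨p, hp, rfl⟩)).symm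
      · exact P.compat p hp q hq'

noncomputable def pstep (P : PI) (n : ℕ) : PI :=
  if n % 4 = 0 then (extend_domG P (n / 4)).choose
  else if n % 4 = 1 then (extend_ranG P (n / 4)).choose
  else if n % 4 = 2 then (extend_domH P (n / 4)).choose
  else (extend_ranH P (n / 4)).choose

lemma pstep_le (P : PI) (n : ℕ) : PI.le P (pstep P n) := by
  unfold pstep
  split_ifs
  · exact (extend_domG P (n / 4)).choose_spec.1
  · exact (extend_ranG P (n / 4)).choose_spec.1
  · exact (extend_domH P (n / 4)).choose_spec.1
  · exact (extend_ranH P (n / 4)).choose_spec.1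

noncomputable def pseq (P0 : PI) : ℕ → PI
  | 0 => P0
  | n + 1 => pstep (pseq P0 n) n

lemma pseq_le (P0 : PI) {m n : ℕ} (h : m ≤ n) : PI.le (pseq P0 m) (pseq P0 n) := by
  induction n with
  | zero => rw [Nat.le_zero.mp h]; exact PI.le_refl _
  | succ n ih =>
    rcases Nat.lt_or_ge m (n + 1) with h' | h'
    · exact PI.le_trans (ih (Nat.lt_succ_iff.mp h')) (pstep_le _ n)
    · rw [le_antisymm h h']
      exact PI.le_refl _


lemma pseq_succ (P0 : PI) (n : ℕ) : pseq P0 (n + 1) = pstep (pseq P0 n) n := rfl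

lemma pstep_key0 (P : PI) (n : ℕ) (h : n % 4 = 0) : n / 4 ∈ (pstep P n).G.map Prod.fst := by
  unfold pstep
  rw [if_pos h]
  exact (extend_domG P (n / 4)).choose_spec.2

lemma pstep_key1 (P : PI) (n : ℕ) (h : n % 4 = 1) : n / 4 ∈ (pstep P n).G.map Prod.snd := by
  unfold pstep
  rw [if_neg (by omega), if_pos h]
  exact (extend_ranG P (n / 4)).choose_spec.2

lemma pstep_key2 (P : PI) (n : ℕ) (h : n % 4 = 2) : n / 4 ∈ (pstep P n).H.map Prod.fst := by
  unfold pstep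
  rw [if_neg (by omega), if_neg (by omega), if_pos h]
  exact (extend_domH P (n / 4)).choose_spec.2

lemma pstep_key3 (P : PI) (n : ℕ) (h : n % 4 = 3) : n / 4 ∈ (pstep P n).H.map Prod.snd := by
  unfold pstep
  rw [if_neg (by omega), if_neg (by omega), if_neg (by omega)]
  exact (extend_ranH P (n / 4)).choose_spec.2

lemma pseq_zero_le (P0 : PI) (n : ℕ) : PI.le P0 (pseq P0 n) := pseq_le P0 (Nat.zero_le n)

lemma mem_keys_exists {l : List (ℕ × ℕ)} {k : ℕ} (h : k ∈ l.map Prod.fst) :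
    ∃ v, (k, v) ∈ l := by
  obtain ⟨⟨a, b⟩, hp, hfst⟩ := List.mem_map.mp h
  subst hfst
  exact ⟨b, hp⟩

lemma mem_vals_exists {l : List (ℕ × ℕ)} {k : ℕ} (h : k ∈ l.map Prod.snd) :
    ∃ v, (v, k) ∈ l := by
  obtain ⟨⟨a, b⟩, hp, hsnd⟩ := List.mem_map.mp h
  subst hsnd
  exact ⟨a, hp⟩

/-- membership in some stage of the chain -/
def GMem (P0 : PI) (i v : ℕ) : Prop := ∃ n, (i, v) ∈ (pseq P0 n).G
def HMem (P0 : PI) (i v : ℕ) : Prop := ∃ n, (i, v) ∈ (pseq P0 n).H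

lemma GMem_total (P0 : PI) (i : ℕ) : ∃ v, GMem P0 i v := by
  have hk := pstep_key0 (pseq P0 (4 * i)) (4 * i) (by omega)
  rw [show (4 * i) / 4 = i by omega] at hk
  rw [← pseq_succ P0 (4 * i)] at hk
  obtain ⟨v, hv⟩ := mem_keys_exists hk
  exact ⟨v, 4 * i + 1, hv⟩

lemma GMem_surj (P0 : PI) (v : ℕ) : ∃ i, GMem P0 i v := by
  have hk := pstep_key1 (pseq P0 (4 * v + 1)) (4 * v + 1) (by omega)
  rw [show (4 * v + 1) / 4 = v by omega] at hk
  rw [← pseq_succ P0 (4 * v + 1)] at hk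
  obtain ⟨i, hi⟩ := mem_vals_exists hk
  exact ⟨i, 4 * v + 2, hi⟩

lemma HMem_total (P0 : PI) (j : ℕ) : ∃ v, HMem P0 j v := by
  have hk := pstep_key2 (pseq P0 (4 * j + 2)) (4 * j + 2) (by omega)
  rw [show (4 * j + 2) / 4 = j by omega] at hk
  rw [← pseq_succ P0 (4 * j + 2)] at hk
  obtain ⟨v, hv⟩ := mem_keys_exists hk
  exact ⟨v, 4 * j + 3, hv⟩

lemma HMem_surj (P0 : PI) (v : ℕ) : ∃ j, HMem P0 j v := by
  have hk := pstep_key3 (pseq P0 (4 * v + 3)) (4 * v + 3) (by omega)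
  rw [show (4 * v + 3) / 4 = v by omega] at hk
  rw [← pseq_succ P0 (4 * v + 3)] at hk
  obtain ⟨j, hj⟩ := mem_vals_exists hk
  exact ⟨j, 4 * v + 4, hj⟩

lemma pair_uniq_fst {l : List (ℕ × ℕ)} (nd : (l.map Prod.fst).Nodup) {i v w : ℕ}
    (h1 : (i, v) ∈ l) (h2 : (i, w) ∈ l) : v = w := by
  have := List.inj_on_of_nodup_map nd h1 h2 rfl
  exact congrArg Prod.snd this

lemma pair_uniq_snd {l : List (ℕ × ℕ)} (nd : (l.map Prod.snd).Nodup) {i i' v : ℕ}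
    (h1 : (i, v) ∈ l) (h2 : (i', v) ∈ l) : i = i' := by
  have := List.inj_on_of_nodup_map nd h1 h2 rfl
  exact congrArg Prod.fst this

lemma GMem_func {P0 : PI} {i v w : ℕ} (h1 : GMem P0 i v) (h2 : GMem P0 i w) : v = w := by
  obtain ⟨n1, h1⟩ := h1
  obtain ⟨n2, h2⟩ := h2
  have m1 := (pseq_le P0 (Nat.le_max_left n1 n2)).1 _ h1
  have m2 := (pseq_le P0 (Nat.le_max_right n1 n2)).1 _ h2
  exact pair_uniq_fst (pseq P0 (max n1 n2)).ndG1 m1 m2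

lemma GMem_inj {P0 : PI} {i i' v : ℕ} (h1 : GMem P0 i v) (h2 : GMem P0 i' v) : i = i' := by
  obtain ⟨n1, h1⟩ := h1
  obtain ⟨n2, h2⟩ := h2
  have m1 := (pseq_le P0 (Nat.le_max_left n1 n2)).1 _ h1
  have m2 := (pseq_le P0 (Nat.le_max_right n1 n2)).1 _ h2
  exact pair_uniq_snd (pseq P0 (max n1 n2)).ndG2 m1 m2

lemma HMem_func {P0 : PI} {i v w : ℕ} (h1 : HMem P0 i v) (h2 : HMem P0 i w) : v = w := by
  obtain ⟨n1, h1⟩ := h1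
  obtain ⟨n2, h2⟩ := h2
  have m1 := (pseq_le P0 (Nat.le_max_left n1 n2)).2 _ h1
  have m2 := (pseq_le P0 (Nat.le_max_right n1 n2)).2 _ h2
  exact pair_uniq_fst (pseq P0 (max n1 n2)).ndH1 m1 m2

lemma HMem_inj {P0 : PI} {i i' v : ℕ} (h1 : HMem P0 i v) (h2 : HMem P0 i' v) : i = i' := by
  obtain ⟨n1, h1⟩ := h1
  obtain ⟨n2, h2⟩ := h2
  have m1 := (pseq_le P0 (Nat.le_max_left n1 n2)).2 _ h1
  have m2 := (pseq_le P0 (Nat.le_max_right n1 n2)).2 _ h2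
  exact pair_uniq_snd (pseq P0 (max n1 n2)).ndH2 m1 m2

set_option maxHeartbeats 1600000 in
/-- The master back-and-forth theorem: any finite partial isomorphism of the level-one
bipartite system extends to a total pair of bijections preserving the colouring. -/
theorem exists_total_iso (P0 : PI) :
    ∃ g h : ℕ → ℕ, Function.Bijective g ∧ Function.Bijective h ∧
      (∀ i j, C (g i) (h j) = C i j) ∧
      (∀ p ∈ P0.G, g p.1 = p.2) ∧ (∀ q ∈ P0.H, h q.1 = q.2) := by
  classical
  choose g hg using GMem_total P0
  choose h hh using HMem_total P0
  refine ⟨g, h, ⟨?_, ?_⟩, ⟨?_, ?_⟩, ?_, ?_, ?_⟩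
  · intro i i' he
    exact GMem_inj (hg i) (he ▸ hg i')
  · intro v
    obtain ⟨i, hi⟩ := GMem_surj P0 v
    exact ⟨i, GMem_func (hg i) hi⟩
  · intro j j' he
    exact HMem_inj (hh j) (he ▸ hh j')
  · intro v
    obtain ⟨j, hj⟩ := HMem_surj P0 v
    exact ⟨j, HMem_func (hh j) hj⟩
  · intro i j
    obtain ⟨n1, h1⟩ := hg i
    obtain ⟨n2, h2⟩ := hh j
    have m1 := (pseq_le P0 (Nat.le_max_left n1 n2)).1 _ h1
    have m2 := (pseq_le P0 (Nat.le_max_right n1 n2)).2 _ h2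
    exact (pseq P0 (max n1 n2)).compat _ m1 _ m2
  · intro p hp
    exact (GMem_func (hg p.1) ⟨0, by exact hp⟩)
  · intro q hq
    exact (HMem_func (hh q.1) ⟨0, by exact hq⟩)

/-! ### Assembling an automorphism of the standard model -/

/-- the action on the carrier induced by permutations of the level-one fibers -/
def act (e1 e2 : ℕ ≃ ℕ) : Mc → Mc
  | .A c i => .A c (if c = 1 then e1 i else i)
  | .B c j => .B c (if c = 1 then e2 j else j)
  | x => x

lemma act_act (e1 e2 f1 f2 : ℕ ≃ ℕ) (h1 : ∀ i, f1 (e1 i) = i) (h2 : ∀ j, f2 (e2 j) = j)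
    (x : Mc) : act f1 f2 (act e1 e2 x) = x := by
  cases x with
  | A c i =>
    by_cases hc : c = 1 <;> simp [act, hc, h1]
  | B c j =>
    by_cases hc : c = 1 <;> simp [act, hc, h2]
  | T _ => rfl
  | L _ => rfl

/-- the underlying equivalence -/
def actEquiv (e1 e2 : ℕ ≃ ℕ) : Mc ≃ Mc where
  toFun := act e1 e2
  invFun := act e1.symm e2.symm
  left_inv := fun x => act_act e1 e2 e1.symm e2.symm (fun i => e1.symm_apply_apply i)
    (fun j => e2.symm_apply_apply j) x
  right_inv := fun x => act_act e1.symm e2.symm e1 e2 (fun i => e1.apply_symm_apply i)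
    (fun j => e2.apply_symm_apply j) x

/-- the automorphism of the standard model induced by a colour-preserving pair of
permutations of the level-one fibers -/
def mcAuto (e1 e2 : ℕ ≃ ℕ) (compat : ∀ i j, C (e1 i) (e2 j) = C i j) : Mc ≃[tLang] Mc where
  toEquiv := actEquiv e1 e2
  map_fun' := by
    intro n f x
    cases f with
    | gT => rfl
    | root => rfl
    | gL => rfl
    | zero => rfl
    | predT =>
      show act e1 e2 (Mc.predTd (x 0)) = Mc.predTd (act e1 e2 (x 0))
      cases hx : x 0 with
      | T o => cases o <;> rfl
      | A c i => rfl
      | B c j => rfl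
      | L o => rfl
    | predL =>
      show act e1 e2 (Mc.predLd (x 0)) = Mc.predLd (act e1 e2 (x 0))
      cases hx : x 0 with
      | L o => cases o <;> rfl
      | A c i => rfl
      | B c j => rfl
      | T o => rfl
    | ellT =>
      show act e1 e2 (Mc.lTd (x 0)) = Mc.lTd (act e1 e2 (x 0))
      cases hx : x 0 with
      | T o => cases o <;> rfl
      | A c i => rfl
      | B c j => rfl
      | L o => rfl
    | ellA =>
      show act e1 e2 (Mc.lAd (x 0)) = Mc.lAd (act e1 e2 (x 0))
      cases hx : x 0 with
      | A c i => rfl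
      | B c j => rfl
      | T o => rfl
      | L o => rfl
    | ellB =>
      show act e1 e2 (Mc.lBd (x 0)) = Mc.lBd (act e1 e2 (x 0))
      cases hx : x 0 with
      | A c i => rfl
      | B c j => rfl
      | T o => rfl
      | L o => rfl
    | meet =>
      show act e1 e2 (Mc.meetd (x 0) (x 1)) = Mc.meetd (act e1 e2 (x 0)) (act e1 e2 (x 1))
      cases hx : x 0 with
      | T o =>
        cases hy : x 1 with
        | T o' => cases o <;> cases o' <;> rfl
        | A _ _ => cases o <;> rfl
        | B _ _ => cases o <;> rfl
        | L _ => cases o <;> rfl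
      | A c i => cases hy : x 1 <;> rfl
      | B c j => cases hy : x 1 <;> rfl
      | L o => cases hy : x 1 <;> rfl
    | app =>
      show act e1 e2 (Mc.appd (x 0) (x 1)) = Mc.appd (act e1 e2 (x 0)) (act e1 e2 (x 1))
      cases hx : x 0 with
      | A c i =>
        cases hy : x 1 with
        | B c' j =>
          by_cases hcc : c = c'
          · subst hcc
            by_cases hc1 : c = 1
            · subst hc1
              show act e1 e2 (if (1:ℕ) = 1 then .T (some (enc 1 (N i j))) else .T none) =
                Mc.appd (.A 1 (e1 i)) (.B 1 (e2 j))
              rw [if_pos rfl]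
              show Mc.T (some (enc 1 (N i j))) =
                (if (1:ℕ) = 1 then Mc.T (some (enc 1 (N (e1 i) (e2 j)))) else .T none)
              rw [if_pos rfl]
              have : enc 1 (N (e1 i) (e2 j)) = enc 1 (N i j) := by
                rw [enc_one, enc_one]
                have := compat i j
                rw [C, C] at this
                rw [this]
              rw [this]
            · show act e1 e2 (if c = c then .T (some (enc c (N i j))) else .T none) =
                Mc.appd (.A c (if c = 1 then e1 i else i)) (.B c (if c = 1 then e2 j else j))
              rw [if_neg hc1, if_neg hc1, if_pos rfl]
              show Mc.T (some (enc c (N i j))) =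
                (if c = c then Mc.T (some (enc c (N i j))) else .T none)
              rw [if_pos rfl]
          · show act e1 e2 (if c = c' then .T (some (enc c (N i j))) else .T none) =
              Mc.appd (.A c (if c = 1 then e1 i else i)) (.B c' (if c' = 1 then e2 j else j))
            rw [if_neg hcc]
            show Mc.T none = (if c = c' then _ else Mc.T none)
            rw [if_neg hcc]
        | A _ _ => rfl
        | T _ => rfl
        | L _ => rfl
      | B c j => cases hy : x 1 <;> rfl
      | T o => cases hy : x 1 <;> rfl
      | L o => cases hy : x 1 <;> rfl
  map_rel' := by
    intro n r x
    cases r with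
    | sortA =>
      show Mc.SAd (act e1 e2 (x 0)) ↔ Mc.SAd (x 0)
      cases x 0 <;> exact Iff.rfl
    | sortB =>
      show Mc.SBd (act e1 e2 (x 0)) ↔ Mc.SBd (x 0)
      cases x 0 <;> exact Iff.rfl
    | sortT =>
      show Mc.STd (act e1 e2 (x 0)) ↔ Mc.STd (x 0)
      cases x 0 <;> exact Iff.rfl
    | sortL =>
      show Mc.SLd (act e1 e2 (x 0)) ↔ Mc.SLd (x 0)
      cases x 0 <;> exact Iff.rfl
    | leT =>
      show Mc.leTd (act e1 e2 (x 0)) (act e1 e2 (x 1)) ↔ Mc.leTd (x 0) (x 1)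
      cases x 0 with
      | T o =>
        cases x 1 with
        | T o' => cases o <;> cases o' <;> exact Iff.rfl
        | A _ _ => cases o <;> exact Iff.rfl
        | B _ _ => cases o <;> exact Iff.rfl
        | L _ => cases o <;> exact Iff.rfl
      | A _ _ => cases x 1 <;> exact Iff.rfl
      | B _ _ => cases x 1 <;> exact Iff.rfl
      | L _ => cases x 1 <;> exact Iff.rfl
    | leL =>
      show Mc.leLd (act e1 e2 (x 0)) (act e1 e2 (x 1)) ↔ Mc.leLd (x 0) (x 1)
      cases x 0 with
      | L o =>
        cases x 1 with
        | L o' => cases o <;> cases o' <;> exact Iff.rfl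
        | A _ _ => cases o <;> exact Iff.rfl
        | B _ _ => cases o <;> exact Iff.rfl
        | T _ => cases o <;> exact Iff.rfl
      | A _ _ => cases x 1 <;> exact Iff.rfl
      | B _ _ => cases x 1 <;> exact Iff.rfl
      | T _ => cases x 1 <;> exact Iff.rfl

/-! ### The formula φ, the types, and the final theorem -/

open Term

/-- the formula `φ(v₁ v₂; w) : f(v₁,w) = f(v₂,w) ∧ f(v₁,w) ≠ g_T` -/
def phiFormula : tLang.Formula (Fin 2 ⊕ Fin 1) :=
  (Term.equal
    (Term.func (TFunc.app : tLang.Functions 2) ![Term.var (Sum.inl 0), Term.var (Sum.inr 0)])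
    (Term.func (TFunc.app : tLang.Functions 2) ![Term.var (Sum.inl 1), Term.var (Sum.inr 0)])) ⊓
  ∼(Term.equal
    (Term.func (TFunc.app : tLang.Functions 2) ![Term.var (Sum.inl 0), Term.var (Sum.inr 0)])
    (Term.func (TFunc.gT : tLang.Functions 0) ![]))

lemma phi_realize (v : Fin 2 → Mc) (b : Fin 1 → Mc) :
    phiFormula.Realize (Sum.elim v b) ↔
      (Mc.appd (v 0) (b 0) = Mc.appd (v 1) (b 0) ∧ Mc.appd (v 0) (b 0) ≠ Mc.T none) := by
  simp only [phiFormula, Formula.realize_inf, Formula.realize_not, Formula.realize_equal,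
    Term.realize_func, Term.realize_var, Sum.elim_inl, Sum.elim_inr]
  exact Iff.rfl

/-- the positive part of the type: a subset of the level-one `B`-fiber determined by
prescribed rows -/
def Dset (k : ℕ) (as : Fin k → ℕ) : Set Mc :=
  {x | ∀ i, Mc.appd (.A 1 (as i)) x = .T (some [false])}

lemma appd_A1_eq (r : ℕ) (x : Mc) :
    Mc.appd (.A 1 r) x = .T (some [false]) ↔ ∃ j, x = .B 1 j ∧ C r j = false := by
  constructor
  · intro h
    cases x with
    | B c j =>
      by_cases hc : (1 : ℕ) = c
      · subst hc
        refine ⟨j, rfl, ?_⟩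
        have hred : Mc.appd (.A 1 r) (.B 1 j) = .T (some (enc 1 (N r j))) := by
          simp [Mc.appd]
        rw [hred] at h
        rw [enc_one] at h
        simpa [C] using h
      · have hred : Mc.appd (.A 1 r) (.B c j) = .T none := by
          simp [Mc.appd, hc]
        rw [hred] at h
        simp at h
    | A _ _ => simp [Mc.appd] at h
    | T _ => simp [Mc.appd] at h
    | L _ => simp [Mc.appd] at h
  · rintro ⟨j, rfl, hC⟩
    have hred : Mc.appd (.A 1 r) (.B 1 j) = .T (some (enc 1 (N r j))) := by
      simp [Mc.appd]
    rw [hred, enc_one]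
    rw [show bitOf (N r j) = C r j from rfl, hC]

/-- extraction of level-one indices -/
def idxA1 : Mc → Finset ℕ
  | .A c i => if c = 1 then {i} else ∅
  | _ => ∅

def idxB1 : Mc → Finset ℕ
  | .B c j => if c = 1 then {j} else ∅
  | _ => ∅

lemma mem_idxA1 {x : Mc} {i : ℕ} : i ∈ idxA1 x ↔ x = .A 1 i := by
  cases x with
  | A c i' =>
    by_cases hc : c = 1
    · subst hc; simp [idxA1, eq_comm]
    · simp only [idxA1, if_neg hc, Finset.notMem_empty, false_iff, Mc.A.injEq, not_and]
      exact fun h _ => hc h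
  | B _ _ => simp [idxB1, idxA1]
  | T _ => simp [idxA1]
  | L _ => simp [idxA1]

lemma mem_idxB1 {x : Mc} {j : ℕ} : j ∈ idxB1 x ↔ x = .B 1 j := by
  cases x with
  | B c j' =>
    by_cases hc : c = 1
    · subst hc; simp [idxB1, eq_comm]
    · simp only [idxB1, if_neg hc, Finset.notMem_empty, false_iff, Mc.B.injEq, not_and]
      exact fun h _ => hc h
  | A _ _ => simp [idxB1]
  | T _ => simp [idxB1]
  | L _ => simp [idxB1]

lemma funext_fin1 {α : Type*} {f g : Fin 1 → α} (h : f 0 = g 0) : f = g := by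
  funext i
  rw [Subsingleton.elim i 0]
  exact h

lemma appd_A1_junk (r : ℕ) {x : Mc} (hx : ∀ j, x ≠ .B 1 j) :
    Mc.appd (.A 1 r) x = .T none := by
  cases x with
  | B c j =>
    by_cases hc : (1 : ℕ) = c
    · exact absurd (hc ▸ rfl) (hx j)
    · simp [Mc.appd, hc]
  | A _ _ => rfl
  | T _ => rfl
  | L _ => rfl

theorem isPhiType_Dset (k : ℕ) (as : Fin (k + 1) → ℕ) :
    IsPhiType Mc phiFormula {b : Fin 1 → Mc | b 0 ∈ Dset (k + 1) as} := by
  classical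
  intro F G hF hG
  set SF : Finset ℕ := F.biUnion (fun x => idxB1 (x 0)) with hSF
  set SG : Finset ℕ := G.biUnion (fun x => idxB1 (x 0)) with hSG
  have hmemSF : ∀ j, j ∈ SF ↔ ∃ x ∈ F, x 0 = Mc.B 1 j := by
    intro j
    simp only [hSF, Finset.mem_biUnion, mem_idxB1]
  have hmemSG : ∀ j, j ∈ SG ↔ ∃ x ∈ G, x 0 = Mc.B 1 j := by
    intro j
    simp only [hSG, Finset.mem_biUnion, mem_idxB1]
  have hdisj : ∀ j, j ∈ SF → j ∈ SG → False := by
    intro j hjF hjG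
    obtain ⟨x, hxF, hx0⟩ := (hmemSF j).mp hjF
    obtain ⟨y, hyG, hy0⟩ := (hmemSG j).mp hjG
    have hxy : x = y := funext_fin1 (by rw [hx0, hy0])
    exact hG y hyG (hxy ▸ hF hxF)
  set l1 : List (ℕ × Bool) := (SF ∪ SG).toList.map (fun j => (j, false)) with hl1
  set l2 : List (ℕ × Bool) :=
    SF.toList.map (fun j => (j, false)) ++ SG.toList.map (fun j => (j, true)) with hl2
  have hnd1 : (l1.map Prod.fst).Nodup := by
    rw [hl1, List.map_map, show (Prod.fst ∘ fun j : ℕ => (j, false)) = id from rfl, List.map_id]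
    exact (SF ∪ SG).nodup_toList
  have hnd2 : (l2.map Prod.fst).Nodup := by
    rw [hl2, List.map_append, List.map_map, List.map_map,
      show (Prod.fst ∘ fun j : ℕ => (j, false)) = id from rfl,
      show (Prod.fst ∘ fun j : ℕ => (j, true)) = id from rfl, List.map_id, List.map_id]
    rw [List.nodup_append]
    refine ⟨SF.nodup_toList, SG.nodup_toList, ?_⟩
    intro a haF b haG hab
    subst hab
    exact hdisj a (Finset.mem_toList.mp haF) (Finset.mem_toList.mp haG)
  obtain ⟨i1, hi1⟩ := (C_rowGeneric hnd1).nonempty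
  obtain ⟨i2, hi2⟩ := (C_rowGeneric hnd2).nonempty
  refine ⟨![Mc.A 1 i1, Mc.A 1 i2], ?_, ?_⟩
  · intro b hb
    have hbq := hF hb
    obtain ⟨j, hb0, _⟩ : ∃ j, b 0 = Mc.B 1 j ∧ C (as 0) j = false := by
      have h0 := hbq 0
      exact appd_A1_eq (as 0) (b 0) |>.mp h0
    have hjSF : j ∈ SF := (hmemSF j).mpr ⟨b, hb, hb0⟩
    have hC1 : C i1 j = false := by
      apply hi1 (j, false)
      rw [hl1]
      exact List.mem_map.mpr ⟨j, Finset.mem_toList.mpr (Finset.mem_union_left _ hjSF), rfl⟩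
    have hC2 : C i2 j = false := by
      apply hi2 (j, false)
      rw [hl2]
      exact List.mem_append_left _ (List.mem_map.mpr ⟨j, Finset.mem_toList.mpr hjSF, rfl⟩)
    rw [phi_realize]
    have e1 : Mc.appd (Mc.A 1 i1) (b 0) = .T (some [false]) :=
      (appd_A1_eq i1 (b 0)).mpr ⟨j, hb0, hC1⟩
    have e2 : Mc.appd (Mc.A 1 i2) (b 0) = .T (some [false]) :=
      (appd_A1_eq i2 (b 0)).mpr ⟨j, hb0, hC2⟩
    constructor
    · show Mc.appd (Mc.A 1 i1) (b 0) = Mc.appd (Mc.A 1 i2) (b 0)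
      rw [e1, e2]
    · show Mc.appd (Mc.A 1 i1) (b 0) ≠ Mc.T none
      rw [e1]
      simp
  · intro b hb hreal
    rw [phi_realize] at hreal
    by_cases hshape : ∃ j, b 0 = Mc.B 1 j
    · obtain ⟨j, hb0⟩ := hshape
      have hjSG : j ∈ SG := (hmemSG j).mpr ⟨b, hb, hb0⟩
      have hC1 : C i1 j = false := by
        apply hi1 (j, false)
        rw [hl1]
        exact List.mem_map.mpr ⟨j, Finset.mem_toList.mpr (Finset.mem_union_right _ hjSG), rfl⟩
      have hC2 : C i2 j = true := by
        apply hi2 (j, true)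
        rw [hl2]
        exact List.mem_append_right _ (List.mem_map.mpr ⟨j, Finset.mem_toList.mpr hjSG, rfl⟩)
      have e1 : Mc.appd (Mc.A 1 i1) (b 0) = .T (some [false]) :=
        (appd_A1_eq i1 (b 0)).mpr ⟨j, hb0, hC1⟩
      have e2 : Mc.appd (Mc.A 1 i2) (b 0) = .T (some [true]) := by
        rw [hb0]
        have hred : Mc.appd (.A 1 i2) (.B 1 j) = .T (some (enc 1 (N i2 j))) := by
          simp [Mc.appd]
        rw [hred, enc_one]
        rw [show bitOf (N i2 j) = C i2 j from rfl, hC2]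
      have := hreal.1
      simp only [Matrix.cons_val_zero, Matrix.cons_val_one, Matrix.head_cons] at this
      rw [e1, e2] at this
      simp at this
    · push_neg at hshape
      have e1 : Mc.appd (Mc.A 1 i1) (b 0) = .T none := appd_A1_junk i1 hshape
      have := hreal.2
      simp only [Matrix.cons_val_zero, Matrix.cons_val_one, Matrix.head_cons] at this
      exact this e1

theorem definable_Dset (k : ℕ) (as : Fin (k + 1) → ℕ) :
    Set.Definable (Set.univ : Set Mc) tLang {b : Fin 1 → Mc | b 0 ∈ Dset (k + 1) as} := by
  rw [Set.definable_iff_exists_formula_sum]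
  refine ⟨BoundedFormula.iInf (fun i : Fin (k + 1) =>
    Term.equal
      (Term.func (TFunc.app : tLang.Functions 2)
        ![Term.var (Sum.inl ⟨Mc.A 1 (as i), Set.mem_univ _⟩), Term.var (Sum.inr 0)])
      (Term.var (Sum.inl ⟨Mc.T (some [false]), Set.mem_univ _⟩))), ?_⟩
  ext b
  show b 0 ∈ Dset (k + 1) as ↔ _
  rw [Set.mem_setOf_eq, Formula.Realize, BoundedFormula.realize_iInf]
  constructor
  · intro hb i
    exact (Formula.realize_equal).mpr (hb i)
  · intro hb i
    exact (Formula.realize_equal).mp (hb i)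

set_option maxHeartbeats 1600000 in
/-- **`T` does not have uniform definability of types**: some formula `φ(v; w)` admits no
uniform definition `ψ(w; u)` for the `φ`-definitions of all definable `φ`-types over all
models of `T`. -/
theorem tTheory_no_uniform_definability_of_types :
    ∃ (n m : ℕ) (φ : tLang.Formula (Fin n ⊕ Fin m)),
      ¬ ∃ (u : ℕ) (ψ : tLang.Formula (Fin m ⊕ Fin u)),
        ∀ (M : Type) [TModel M] (q : Set (Fin m → M)),
          IsPhiType M φ q → Set.Definable (Set.univ : Set M) tLang q →
          ∃ c : Fin u → M, q = {b : Fin m → M | ψ.Realize (Sum.elim b c)} := by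
  classical
  refine ⟨2, 1, phiFormula, ?_⟩
  rintro ⟨u, ψ, hψ⟩
  set as : Fin (u + 1) → ℕ := fun i => (i : ℕ) with has
  set q : Set (Fin 1 → Mc) := {b | b 0 ∈ Dset (u + 1) as} with hq
  obtain ⟨cb, hcb⟩ := hψ Mc q (isPhiType_Dset u as) (definable_Dset u as)
  -- pigeonhole: some row `as jx` is not a parameter
  have hpig : ∃ jx : Fin (u + 1), ∀ kk : Fin u, cb kk ≠ Mc.A 1 (as jx) := by
    by_contra hcon
    push_neg at hcon
    choose Fm hFm using hcon
    have hinj : Function.Injective Fm := by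
      intro j j' he
      have h1 : Mc.A 1 (as j) = Mc.A 1 (as j') := by rw [← hFm j, ← hFm j', he]
      have h2 : as j = as j' := by simpa using h1
      exact Fin.val_injective h2
    have := Fintype.card_le_of_injective Fm hinj
    simp at this
  obtain ⟨jx, hjx⟩ := hpig
  set ajx : ℕ := as jx with hajx
  -- index sets of the parameters
  set SA1 : Finset ℕ := Finset.univ.biUnion (fun kk : Fin u => idxA1 (cb kk)) with hSA1
  set SB1 : Finset ℕ := Finset.univ.biUnion (fun kk : Fin u => idxB1 (cb kk)) with hSB1
  have hmemSA1 : ∀ i, i ∈ SA1 ↔ ∃ kk, cb kk = Mc.A 1 i := by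
    intro i
    simp only [hSA1, Finset.mem_biUnion, Finset.mem_univ, true_and, mem_idxA1]
  have hmemSB1 : ∀ j, j ∈ SB1 ↔ ∃ kk, cb kk = Mc.B 1 j := by
    intro j
    simp only [hSB1, Finset.mem_biUnion, Finset.mem_univ, true_and, mem_idxB1]
  have hajxSA : ajx ∉ SA1 := by
    intro hmem
    obtain ⟨kk, hkk⟩ := (hmemSA1 ajx).mp hmem
    exact hjx kk hkk
  set KK : Finset ℕ := SA1 ∪ Finset.univ.image (fun i : Fin (u + 1) => as i) with hKK
  have hajxKK : ajx ∈ KK := by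
    rw [hKK]
    exact Finset.mem_union_right _ (Finset.mem_image.mpr ⟨jx, Finset.mem_univ _, rfl⟩)
  -- choose the two fresh rows
  have hndSB : ((SB1.toList.map fun j => (j, C ajx j)).map Prod.fst).Nodup := by
    rw [List.map_map, show (Prod.fst ∘ fun j : ℕ => (j, C ajx j)) = id from rfl, List.map_id]
    exact SB1.nodup_toList
  obtain ⟨a1, ha1KK, ha1vals⟩ :=
    exists_fresh_row (SB1.toList.map fun j => (j, C ajx j)) hndSB KK
  obtain ⟨a2, ha2KK, ha2vals⟩ :=
    exists_fresh_row (SB1.toList.map fun j => (j, C ajx j)) hndSB (insert a1 KK)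
  have ha2KK' : a2 ∉ KK := fun h => ha2KK (Finset.mem_insert_of_mem h)
  have ha2a1 : a2 ≠ a1 := fun h => ha2KK (h ▸ Finset.mem_insert_self a1 KK)
  have ha1vals' : ∀ j ∈ SB1, C a1 j = C ajx j := by
    intro j hj
    exact ha1vals (j, C ajx j) (List.mem_map.mpr ⟨j, Finset.mem_toList.mpr hj, rfl⟩)
  have ha2vals' : ∀ j ∈ SB1, C a2 j = C ajx j := by
    intro j hj
    exact ha2vals (j, C ajx j) (List.mem_map.mpr ⟨j, Finset.mem_toList.mpr hj, rfl⟩)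
  -- the initial partial isomorphism
  set ids : List ℕ := (KK.erase ajx).toList with hids
  have hids_mem : ∀ i ∈ ids, i ∈ KK ∧ i ≠ ajx := by
    intro i hi
    rw [hids, Finset.mem_toList, Finset.mem_erase] at hi
    exact ⟨hi.2, hi.1⟩
  set G0 : List (ℕ × ℕ) := (ajx, a1) :: (a2, ajx) :: ids.map (fun i => (i, i)) with hG0
  set H0 : List (ℕ × ℕ) := SB1.toList.map (fun j => (j, j)) with hH0
  have hidskeys : (ids.map (fun i => (i, i))).map Prod.fst = ids := by
    rw [List.map_map, show (Prod.fst ∘ fun i : ℕ => (i, i)) = id from rfl, List.map_id]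
  have hidsvals : (ids.map (fun i => (i, i))).map Prod.snd = ids := by
    rw [List.map_map, show (Prod.snd ∘ fun i : ℕ => (i, i)) = id from rfl, List.map_id]
  have hidsnd : ids.Nodup := by rw [hids]; exact Finset.nodup_toList _
  have hndG1 : (G0.map Prod.fst).Nodup := by
    rw [hG0]
    simp only [List.map_cons, hidskeys, List.nodup_cons]
    refine ⟨?_, ?_, hidsnd⟩
    · intro hmem
      rcases List.mem_cons.mp hmem with heq | hmem'
      · exact ha2KK' (heq ▸ hajxKK)
      · exact (hids_mem _ hmem').2 rfl
    · intro hmem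
      exact ha2KK' ((hids_mem _ hmem).1)
  have hndG2 : (G0.map Prod.snd).Nodup := by
    rw [hG0]
    simp only [List.map_cons, hidsvals, List.nodup_cons]
    refine ⟨?_, ?_, hidsnd⟩
    · intro hmem
      rcases List.mem_cons.mp hmem with heq | hmem'
      · exact ha1KK (heq ▸ hajxKK)
      · exact ha1KK ((hids_mem _ hmem').1)
    · intro hmem
      exact (hids_mem _ hmem).2 rfl
  have hndH1 : (H0.map Prod.fst).Nodup := by
    rw [hH0, List.map_map, show (Prod.fst ∘ fun j : ℕ => (j, j)) = id from rfl, List.map_id]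
    exact SB1.nodup_toList
  have hndH2 : (H0.map Prod.snd).Nodup := by
    rw [hH0, List.map_map, show (Prod.snd ∘ fun j : ℕ => (j, j)) = id from rfl, List.map_id]
    exact SB1.nodup_toList
  have hcompat0 : ∀ p ∈ G0, ∀ qq ∈ H0, C p.2 qq.2 = C p.1 qq.1 := by
    intro p hp qq hqq
    obtain ⟨j, hj, rfl⟩ := List.mem_map.mp hqq
    have hjSB : j ∈ SB1 := Finset.mem_toList.mp hj
    rcases List.mem_cons.mp hp with rfl | hp'
    · exact ha1vals' j hjSB
    · rcases List.mem_cons.mp hp' with rfl | hp''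
      · exact (ha2vals' j hjSB).symm
      · obtain ⟨i, _, rfl⟩ := List.mem_map.mp hp''
        rfl
  set P0 : PI := ⟨G0, H0, hndG1, hndG2, hndH1, hndH2, hcompat0⟩ with hP0
  obtain ⟨g, h, hgbij, hhbij, hcompat, hgspec, hhspec⟩ := exists_total_iso P0
  set e1 : ℕ ≃ ℕ := Equiv.ofBijective g hgbij with he1
  set e2 : ℕ ≃ ℕ := Equiv.ofBijective h hhbij with he2
  have hcompat' : ∀ i j, C (e1 i) (e2 j) = C i j := hcompat
  set α : Mc ≃[tLang] Mc := mcAuto e1 e2 hcompat' with hα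
  -- facts about g and h
  have hg_ajx : g ajx = a1 := hgspec (ajx, a1) (by rw [hP0]; exact List.mem_cons_self)
  have hg_a2 : g a2 = ajx := hgspec (a2, ajx)
    (by rw [hP0]; exact List.mem_cons_of_mem _ (List.mem_cons_self))
  have hg_id : ∀ i ∈ KK, i ≠ ajx → g i = i := by
    intro i hi hne
    apply hgspec (i, i)
    rw [hP0]
    refine List.mem_cons_of_mem _ (List.mem_cons_of_mem _ (List.mem_map.mpr ⟨i, ?_, rfl⟩))
    rw [hids, Finset.mem_toList, Finset.mem_erase]
    exact ⟨hne, hi⟩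
  have hh_id : ∀ j ∈ SB1, h j = j := by
    intro j hj
    apply hhspec (j, j)
    rw [hP0]
    exact List.mem_map.mpr ⟨j, Finset.mem_toList.mpr hj, rfl⟩
  -- α fixes all parameters
  have hfix : ∀ kk : Fin u, act e1 e2 (cb kk) = cb kk := by
    intro kk
    cases hck : cb kk with
    | A c i =>
      by_cases hc : c = 1
      · subst hc
        have hiSA : i ∈ SA1 := (hmemSA1 i).mpr ⟨kk, hck⟩
        have hiKK : i ∈ KK := by rw [hKK]; exact Finset.mem_union_left _ hiSA
        have hine : i ≠ ajx := by
          intro heq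
          exact hajxSA (heq ▸ hiSA)
        show Mc.A 1 (if (1 : ℕ) = 1 then e1 i else i) = Mc.A 1 i
        rw [if_pos rfl]
        show Mc.A 1 (g i) = Mc.A 1 i
        rw [hg_id i hiKK hine]
      · show Mc.A c (if c = 1 then e1 i else i) = Mc.A c i
        rw [if_neg hc]
    | B c j =>
      by_cases hc : c = 1
      · subst hc
        have hjSB : j ∈ SB1 := (hmemSB1 j).mpr ⟨kk, hck⟩
        show Mc.B 1 (if (1 : ℕ) = 1 then e2 j else j) = Mc.B 1 j
        rw [if_pos rfl]
        show Mc.B 1 (h j) = Mc.B 1 j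
        rw [hh_id j hjSB]
      · show Mc.B c (if c = 1 then e2 j else j) = Mc.B c j
        rw [if_neg hc]
    | T _ => rfl
    | L _ => rfl
  -- choose the distinguishing column
  set rowsl : List (ℕ × Bool) :=
    ((Finset.univ.image (fun i : Fin (u + 1) => as i)).toList.map fun r => (r, false)) ++
      [(a2, true)] with hrowsl
  have hndrows : (rowsl.map Prod.fst).Nodup := by
    rw [hrowsl, List.map_append, List.map_map,
      show (Prod.fst ∘ fun r : ℕ => (r, false)) = id from rfl, List.map_id]
    rw [List.nodup_append]
    refine ⟨Finset.nodup_toList _, List.nodup_singleton _, ?_⟩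
    intro x hx y hx2 hxy
    subst hxy
    simp only [List.map_cons, List.map_nil, List.mem_singleton] at hx2
    subst hx2
    apply ha2KK'
    rw [hKK]
    exact Finset.mem_union_right _ (Finset.mem_toList.mp hx)
  obtain ⟨jst, hjst⟩ := (C_colGeneric hndrows).nonempty
  have hrow_false : ∀ i : Fin (u + 1), C (as i) jst = false := by
    intro i
    apply hjst (as i, false)
    rw [hrowsl]
    exact List.mem_append_left _
      (List.mem_map.mpr ⟨as i, Finset.mem_toList.mpr
        (Finset.mem_image.mpr ⟨i, Finset.mem_univ _, rfl⟩), rfl⟩)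
  have hrow_true : C a2 jst = true := by
    apply hjst (a2, true)
    rw [hrowsl]
    exact List.mem_append_right _ (List.mem_singleton.mpr rfl)
  set xs : Mc := Mc.B 1 jst with hxs
  have hxD : xs ∈ Dset (u + 1) as := by
    intro i
    exact (appd_A1_eq (as i) xs).mpr ⟨jst, rfl, hrow_false i⟩
  have hxq : (fun _ : Fin 1 => xs) ∈ q := hxD
  -- the image of xs under α is not in Dset
  have hCmoved : C ajx (h jst) = true := by
    have := hcompat a2 jst
    rw [hg_a2] at this
    rw [this, hrow_true]
  have hnotD : Mc.B 1 (h jst) ∉ Dset (u + 1) as := by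
    intro hD
    have := hD jx
    obtain ⟨j', hj', hCj'⟩ := (appd_A1_eq (as jx) (Mc.B 1 (h jst))).mp this
    have : h jst = j' := by simpa using hj'
    rw [← this] at hCj'
    rw [← hajx] at hCj'
    rw [hCmoved] at hCj'
    exact Bool.noConfusion hCj'
  -- transport along the automorphism
  have h1 : ψ.Realize (Sum.elim (fun _ : Fin 1 => xs) cb) := by
    have := hxq
    rw [hcb] at this
    exact this
  have h2 : ψ.Realize (⇑α ∘ Sum.elim (fun _ : Fin 1 => xs) cb) :=
    (StrongHomClass.realize_formula α (φ := ψ)).mpr h1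
  have hcomp : (⇑α ∘ Sum.elim (fun _ : Fin 1 => xs) cb) =
      Sum.elim (fun _ : Fin 1 => Mc.B 1 (h jst)) cb := by
    funext z
    cases z with
    | inl i =>
      show (α : Mc → Mc) xs = Mc.B 1 (h jst)
      show act e1 e2 (Mc.B 1 jst) = Mc.B 1 (h jst)
      show Mc.B 1 (if (1 : ℕ) = 1 then e2 jst else jst) = Mc.B 1 (h jst)
      rw [if_pos rfl]
      rfl
    | inr kk =>
      show (α : Mc → Mc) (cb kk) = cb kk
      exact hfix kk
  rw [hcomp] at h2
  have hmem : (fun _ : Fin 1 => Mc.B 1 (h jst)) ∈ q := by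
    rw [hcb]
    exact h2
  exact hnotD hmem

end BPPaper
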